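/- If a group G admits a faithful orientation-preserving affine action on ℤ^n_lex for some n ∈ ℕ, then G is finitely generated, torsion-free, and nilpotent. -/

import Mathlib

/-- `Fin n → R` with the lexicographic order in which the **last** coordinate is the most
significant: `x < y` iff `x ≠ y` and `x i < y i` at the largest index `i` where `x` and `y`
differ. -/
def LexPow (R : Type*) (n : ℕ) : Type _ := Fin n → R

namespace LexPow

variable {R : Type*} {n : ℕ}

/-- The identity bijection between `Fin n → R` and `LexPow R n`. -/
def of : (Fin n → R) ≃ LexPow R n := Equiv.refl _

instance : CoeFun (LexPow R n) (fun _ => Fin n → R) := ⟨fun x => x⟩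

instance [AddCommGroup R] : AddCommGroup (LexPow R n) :=
  inferInstanceAs (AddCommGroup (Fin n → R))

/-- The map reversing coordinates, into the Mathlib lexicographic order (in which the *first*
coordinate is most significant). -/
def toRevLex (x : LexPow R n) : Lex (Fin n → R) :=
  toLex (fun i : Fin n => of.symm x (Fin.rev i))

theorem toRevLex_injective : Function.Injective (toRevLex (R := R) (n := n)) := by
  intro a b hab
  refine of.symm.injective (funext fun i => ?_)
  have h := congrFun (congrArg ofLex hab) (Fin.rev i)
  simpa [toRevLex, Fin.rev_rev] using h

noncomputable instance [AddCommGroup R] [LinearOrder R] [IsOrderedAddMonoid R] :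
    LinearOrder (LexPow R n) :=
  LinearOrder.lift' (toRevLex (R := R) (n := n)) toRevLex_injective

instance [AddCommGroup R] [LinearOrder R] [IsOrderedAddMonoid R] :
    IsOrderedAddMonoid (LexPow R n) where
  add_le_add_left := fun a b hab c => by
    show toRevLex (a + c) ≤ toRevLex (b + c)
    have h : toRevLex a ≤ toRevLex b := hab
    exact add_le_add_left h (toRevLex c)

end LexPow

/-- An orientation-preserving affine automorphism of a linearly ordered abelian group `Λ`:
an order-preserving bijection `g` of `Λ` admitting an order-preserving group automorphism
`dilation` (the dilation factor) with `g x - g y = dilation (x - y)` for all `x, y`. -/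
structure OPAffineAut (Λ : Type*) [AddCommGroup Λ] [LinearOrder Λ] [IsOrderedAddMonoid Λ] extends Λ ≃ Λ where
  strictMono' : StrictMono toEquiv
  dilation : Λ ≃+ Λ
  dilation_strictMono : StrictMono dilation
  affine : ∀ x y : Λ, toEquiv x - toEquiv y = dilation (x - y)

namespace OPAffineAut

variable {Λ : Type*} [AddCommGroup Λ] [LinearOrder Λ] [IsOrderedAddMonoid Λ]

instance : CoeFun (OPAffineAut Λ) (fun _ => Λ → Λ) := ⟨fun f => f.toEquiv⟩

theorem ext' {f g : OPAffineAut Λ} (h : ∀ x, f x = g x) : f = g := by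
  have he : f.toEquiv = g.toEquiv := Equiv.ext h
  have hd : f.dilation = g.dilation := AddEquiv.ext fun x => by
    have hf := f.affine x 0
    have hg := g.affine x 0
    rw [sub_zero] at hf hg
    rw [← hf, ← hg]
    show f x - f 0 = g x - g 0
    rw [h x, h 0]
  cases f; cases g
  cases he; cases hd
  rfl

instance : Group (OPAffineAut Λ) where
  one :=
    { toEquiv := Equiv.refl Λ
      strictMono' := strictMono_id
      dilation := AddEquiv.refl Λ
      dilation_strictMono := strictMono_id
      affine := fun _ _ => rfl }
  mul f g :=
    { toEquiv := g.toEquiv.trans f.toEquiv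
      strictMono' := f.strictMono'.comp g.strictMono'
      dilation := g.dilation.trans f.dilation
      dilation_strictMono := f.dilation_strictMono.comp g.dilation_strictMono
      affine := fun x y => by
        simp only [Equiv.trans_apply, AddEquiv.trans_apply]
        rw [f.affine, g.affine] }
  inv f :=
    { toEquiv := f.toEquiv.symm
      strictMono' := fun a b hab => f.strictMono'.lt_iff_lt.1 (by
        simpa only [Equiv.apply_symm_apply] using hab)
      dilation := f.dilation.symm
      dilation_strictMono := fun a b hab => f.dilation_strictMono.lt_iff_lt.1 (by
        simpa only [AddEquiv.apply_symm_apply] using hab)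
      affine := fun x y => f.dilation.injective (by
        rw [AddEquiv.apply_symm_apply, ← f.affine, Equiv.apply_symm_apply,
          Equiv.apply_symm_apply]) }
  mul_assoc f g h := ext' fun _ => rfl
  one_mul f := ext' fun _ => rfl
  mul_one f := ext' fun _ => rfl
  inv_mul_cancel f := ext' fun x => f.toEquiv.symm_apply_apply x

@[simp] theorem mul_apply (f g : OPAffineAut Λ) (x : Λ) : (f * g) x = f (g x) := rfl
@[simp] theorem one_apply (x : Λ) : (1 : OPAffineAut Λ) x = x := rfl
@[simp] theorem inv_apply (f : OPAffineAut Λ) (x : Λ) : f⁻¹ x = f.toEquiv.symm x := rfl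

/-- An affine automorphism is *hyperbolic* if it has no fixed point. -/
def Hyperbolic (f : OPAffineAut Λ) : Prop := ∀ x : Λ, f x ≠ x

/-- An affine automorphism is *rigid* if for `ε = ±1`, whenever `f^ε` moves some point up,
it moves every point up. -/
def Rigid (f : OPAffineAut Λ) : Prop :=
  ∀ ε : ℤ, ε = 1 ∨ ε = -1 → (∃ x : Λ, x < (f ^ ε) x) → ∀ y : Λ, y < (f ^ ε) y

end OPAffineAut

/-- An orientation-preserving affine action (a homomorphism into the group of
orientation-preserving affine automorphisms) is *free* if every nontrivial group element
acts without fixed points. -/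
def AffineActionFree {G Λ : Type*} [Group G] [AddCommGroup Λ] [LinearOrder Λ] [IsOrderedAddMonoid Λ]
    (ρ : G →* OPAffineAut Λ) : Prop :=
  ∀ g : G, g ≠ 1 → ∀ x : Λ, ρ g x ≠ x

/-- An orientation-preserving affine action is *essentially free* if every nontrivial group
element acts as a rigid hyperbolic affine automorphism. -/
def AffineActionEssentiallyFree {G Λ : Type*} [Group G] [AddCommGroup Λ] [LinearOrder Λ] [IsOrderedAddMonoid Λ]
    (ρ : G →* OPAffineAut Λ) : Prop :=
  ∀ g : G, g ≠ 1 → (ρ g).Rigid ∧ (ρ g).Hyperbolic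

/-- `G` admits an essentially free orientation-preserving affine action on `Λ`. -/
def HasEssentiallyFreeAffineAction (G : Type*) [Group G] (Λ : Type*)
    [AddCommGroup Λ] [LinearOrder Λ] [IsOrderedAddMonoid Λ] : Prop :=
  ∃ ρ : G →* OPAffineAut Λ, AffineActionEssentiallyFree ρ

/-- A monoid is torsion-free if no nontrivial element has finite order (the definition
`Monoid.IsTorsionFree` of the older Mathlib, since removed). -/
def Monoid.IsTorsionFree (G : Type*) [Monoid G] : Prop :=
  ∀ g : G, g ≠ 1 → ¬IsOfFinOrder g


namespace AffProof
open LexPow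
open scoped commutatorElement

variable {n : ℕ}

theorem lexpow_lt_iff {a b : LexPow ℤ n} :
    a < b ↔ ∃ i : Fin n, a i < b i ∧ ∀ j, i < j → a j = b j := by
  show Pi.Lex _ _ _ _ ↔ _
  unfold Pi.Lex
  constructor
  · rintro ⟨i, h1, h2⟩
    refine ⟨Fin.rev i, h2, fun j hj => ?_⟩
    have hj' : Fin.rev j < i := by
      simpa [Fin.rev_rev] using Fin.rev_lt_rev.mpr hj
    have h := h1 (Fin.rev j) hj'
    simp [toRevLex, of, Fin.rev_rev] at h
    exact h
  · rintro ⟨i, h2, h1⟩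
    refine ⟨Fin.rev i, fun j hj => ?_, by
      show (of.symm a) (Fin.rev (Fin.rev i)) < (of.symm b) (Fin.rev (Fin.rev i))
      rw [Fin.rev_rev]; exact h2⟩
    have hj' : i < Fin.rev j := by
      simpa [Fin.rev_rev] using Fin.rev_lt_rev.mpr hj
    exact h1 (Fin.rev j) hj'

/-- `x` lies in the convex subgroup `V m` of vectors vanishing at coordinates `≥ m`. -/
def InV (m : ℕ) (x : LexPow ℤ n) : Prop := ∀ i : Fin n, m ≤ (i : ℕ) → x i = 0

theorem InV.mono {m m' : ℕ} (h : m ≤ m') {x : LexPow ℤ n} (hx : InV m x) : InV m' x :=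
  fun i hi => hx i (le_trans h hi)

theorem InV.zero {m : ℕ} : InV m (0 : LexPow ℤ n) := fun _ _ => rfl

theorem InV.add {m : ℕ} {x y : LexPow ℤ n} (hx : InV m x) (hy : InV m y) :
    InV m (x + y) := fun i hi => by
  show x i + y i = 0
  rw [hx i hi, hy i hi, add_zero]

theorem InV.neg {m : ℕ} {x : LexPow ℤ n} (hx : InV m x) : InV m (-x) := fun i hi => by
  show -(x i) = 0
  rw [hx i hi, neg_zero]

theorem InV.sub {m : ℕ} {x y : LexPow ℤ n} (hx : InV m x) (hy : InV m y) :
    InV m (x - y) := by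
  simpa [sub_eq_add_neg] using hx.add hy.neg

theorem InV.smul {m : ℕ} (c : ℤ) {x : LexPow ℤ n} (hx : InV m x) : InV m (c • x) :=
  fun i hi => by
  show c * x i = 0
  rw [hx i hi, mul_zero]

theorem inV_zero_iff {x : LexPow ℤ n} : InV 0 x ↔ x = 0 := by
  constructor
  · intro h; funext i; exact h i (Nat.zero_le _)
  · rintro rfl; exact InV.zero

theorem inV_of_ge {m : ℕ} (hm : n ≤ m) (x : LexPow ℤ n) : InV m x :=
  fun i hi => absurd i.isLt (by omega)

/-- standard basis vector -/
def e (k : Fin n) : LexPow ℤ n := Pi.single k 1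

@[simp] theorem e_same (k : Fin n) : e k k = 1 := Pi.single_eq_same k 1

theorem e_ne (k j : Fin n) (h : j ≠ k) : e k j = 0 := Pi.single_eq_of_ne h 1

/-- `s` is the top (most significant nonzero) index of `x`. -/
def IsTop (x : LexPow ℤ n) (s : Fin n) : Prop := x s ≠ 0 ∧ ∀ j, s < j → x j = 0

theorem exists_isTop {x : LexPow ℤ n} (hx : x ≠ 0) : ∃ s, IsTop x s := by
  classical
  have hne : (Finset.univ.filter fun i => x i ≠ 0).Nonempty := by
    rcases Function.ne_iff.1 hx with ⟨i, hi⟩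
    exact ⟨i, by simpa using (show x i ≠ 0 from hi)⟩
  refine ⟨(Finset.univ.filter fun i => x i ≠ 0).max' hne, ?_, fun j hj => ?_⟩
  · have := (Finset.univ.filter fun i => x i ≠ 0).max'_mem hne
    simpa using this
  · by_contra h
    have hjS : j ∈ Finset.univ.filter fun i => x i ≠ 0 := by simpa using h
    exact absurd (Finset.le_max' _ j hjS) (not_le.mpr hj)

theorem IsTop.unique {x : LexPow ℤ n} {s t : Fin n} (hs : IsTop x s) (ht : IsTop x t) :
    s = t := by
  by_contra h
  rcases lt_or_gt_of_ne h with h' | h'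
  · exact ht.1 (hs.2 t h')
  · exact hs.1 (ht.2 s h')

theorem IsTop.pos {x : LexPow ℤ n} {s : Fin n} (hs : IsTop x s) (hx : 0 < x) : 0 < x s := by
  rcases lexpow_lt_iff.1 hx with ⟨i, hi, hj⟩
  have hzi : (0 : LexPow ℤ n) i = 0 := rfl
  have hxi : 0 < x i := by rw [← hzi]; exact hi
  have : i = s := by
    by_contra h
    rcases lt_or_gt_of_ne h with h' | h'
    · exact hs.1 ((hj s h').symm.trans rfl)
    · exact absurd (hs.2 i h') (by omega)
  rwa [← this]



theorem e_pos (k : Fin n) : (0 : LexPow ℤ n) < e k := by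
  refine lexpow_lt_iff.2 ⟨k, by show (0:ℤ) < e k k; simp, fun j hj => ?_⟩
  exact (e_ne k j (ne_of_gt hj)).symm

theorem isTop_e (k : Fin n) : IsTop (e k) k :=
  ⟨by simp, fun j hj => e_ne k j (ne_of_gt hj)⟩

theorem smul_apply' (m : ℤ) (x : LexPow ℤ n) (i : Fin n) : (m • x) i = m * x i := rfl

theorem inV_iff_smul_lt {y : LexPow ℤ n} {s : Fin n} (hy : 0 < y) (hs : IsTop y s)
    (x : LexPow ℤ n) : InV (s : ℕ) x ↔ ∀ m : ℤ, m • x < y := by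
  constructor
  · intro hx m
    refine lexpow_lt_iff.2 ⟨s, ?_, fun j hj => ?_⟩
    · rw [smul_apply', hx s le_rfl, mul_zero]
      exact hs.pos hy
    · rw [smul_apply', hx j (by omega), mul_zero, hs.2 j hj]
  · intro h
    by_contra hx
    unfold InV at hx
    push_neg at hx
    rcases hx with ⟨i, his, hi⟩
    have hxne : x ≠ 0 := fun h0 => hi (by rw [h0]; rfl)
    rcases exists_isTop hxne with ⟨t, ht⟩
    have hts : (s : ℕ) ≤ (t : ℕ) := by
      by_contra hlt
      exact hi (ht.2 i (by omega))
    have hyt : 0 ≤ y t := by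
      rcases eq_or_lt_of_le hts with heq | hlt
      · have : s = t := Fin.ext heq
        subst this
        exact le_of_lt (hs.pos hy)
      · rw [hs.2 t (by omega)]
    set m : ℤ := if 0 < x t then y t + 1 else -(y t + 1) with hm
    have hkey : y t < m * x t := by
      rcases lt_trichotomy (x t) 0 with hneg | hzero | hpos
      · have : m = -(y t + 1) := by rw [hm, if_neg (by omega)]
        rw [this]; nlinarith
      · exact absurd hzero ht.1
      · have : m = y t + 1 := by rw [hm, if_pos hpos]
        rw [this]; nlinarith
    have : y < m • x := by
      refine lexpow_lt_iff.2 ⟨t, by rwa [smul_apply'], fun j hj => ?_⟩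
      rw [smul_apply', ht.2 j hj, mul_zero, hs.2 j (by omega)]
    exact absurd (h m) (asymm this)



section Dilation

variable {n : ℕ} (α : LexPow ℤ n ≃+ LexPow ℤ n)

theorem alpha_pos (hα : StrictMono α) {y : LexPow ℤ n} (hy : 0 < y) : 0 < α y := by
  have := hα hy
  rwa [map_zero] at this

theorem map_top_aux (hα : StrictMono α) {y : LexPow ℤ n} {s t : Fin n}
    (hy : 0 < y) (hs : IsTop y s) (ht : IsTop (α y) t) (x : LexPow ℤ n) :
    InV (s : ℕ) x ↔ InV (t : ℕ) (α x) := by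
  rw [inV_iff_smul_lt hy hs x, inV_iff_smul_lt (alpha_pos α hα hy) ht (α x)]
  constructor
  · intro h m
    have := hα (h m)
    rwa [map_zsmul] at this
  · intro h m
    have := h m
    rw [← map_zsmul] at this
    exact hα.lt_iff_lt.1 this

theorem alpha_e_ne (k : Fin n) : α (e k) ≠ 0 := fun hc => by
  have h0 : e k = 0 := α.injective (by rw [hc, map_zero])
  have h1 := congrFun h0 k
  rw [e_same] at h1
  exact one_ne_zero ((h1 : (1:ℤ) = 0))

/-- the image of the `k`-th top index under the dilation `α` -/
noncomputable def sig (k : Fin n) : Fin n :=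
  (exists_isTop (alpha_e_ne α k)).choose

theorem sig_spec (k : Fin n) : IsTop (α (e k)) (sig α k) :=
  (exists_isTop (alpha_e_ne α k)).choose_spec

theorem top_map (hα : StrictMono α) {y : LexPow ℤ n} {s : Fin n}
    (hy : 0 < y) (hs : IsTop y s) : IsTop (α y) (sig α s) := by
  have hyne : α y ≠ 0 := fun hc => by
    have : y = 0 := α.injective (by rw [hc, map_zero])
    exact absurd this (ne_of_gt hy)
  rcases exists_isTop hyne with ⟨t, ht⟩
  have h1 : ∀ x, InV (s : ℕ) x ↔ InV (t : ℕ) (α x) := map_top_aux α hα hy hs ht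
  have h2 : ∀ x, InV (s : ℕ) x ↔ InV (sig α s : ℕ) (α x) :=
    map_top_aux α hα (e_pos s) (isTop_e s) (sig_spec α s)
  have h3 : ∀ z : LexPow ℤ n, InV (t : ℕ) z ↔ InV (sig α s : ℕ) z := by
    intro z
    have := (h1 (α.symm z)).symm.trans (h2 (α.symm z))
    rwa [α.apply_symm_apply] at this
  have : t = sig α s := by
    by_contra hne
    rcases lt_or_gt_of_ne hne with hlt | hgt
    · have hmem : InV (sig α s : ℕ) (e t) := fun i hi =>
        e_ne t i (by rw [Fin.lt_iff_val_lt_val] at hlt; intro hc; subst hc; omega)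
      have := (h3 (e t)).2 hmem t le_rfl
      simp at this
    · have hmem : InV (t : ℕ) (e (sig α s)) := fun i hi => by
        have hv : (sig α s : ℕ) < (t : ℕ) := Fin.lt_iff_val_lt_val.mp hgt
        exact e_ne _ i (by intro hc; subst hc; exact absurd hi (not_le.mpr hv))
      have := (h3 (e (sig α s))).1 hmem (sig α s) le_rfl
      simp at this
  rwa [this] at ht

theorem sig_strictMono (hα : StrictMono α) : StrictMono (sig α) := by
  intro k l hkl
  have hmem : InV (l : ℕ) (e k) := fun i hi =>
    e_ne k i (by rw [Fin.lt_iff_val_lt_val] at hkl; intro hc; subst hc; omega)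
  have h2 := (map_top_aux α hα (e_pos l) (isTop_e l) (sig_spec α l) (e k)).1 hmem
  by_contra hle
  rw [Fin.lt_iff_val_lt_val] at hle
  have hvs : (sig α l : ℕ) ≤ (sig α k : ℕ) := by omega
  exact (sig_spec α k).1 (h2 (sig α k) hvs)

theorem symm_strictMono (hα : StrictMono α) : StrictMono α.symm := by
  intro a b hab
  rw [← hα.lt_iff_lt, α.apply_symm_apply, α.apply_symm_apply]
  exact hab

theorem sig_eq_id (hα : StrictMono α) (k : Fin n) : sig α k = k := by
  haveI : WellFoundedLT (Fin n) := inferInstance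
  have hsymm := symm_strictMono α hα
  have h1 : sig α.symm (sig α k) = k := by
    have := top_map α.symm hsymm (alpha_pos α hα (e_pos k)) (sig_spec α k)
    rw [α.symm_apply_apply] at this
    exact ((isTop_e k).unique this).symm
  have le1 : k ≤ sig α k := (sig_strictMono α hα).le_apply
  have le2 : sig α k ≤ sig α.symm (sig α k) := (sig_strictMono α.symm hsymm).le_apply
  rw [h1] at le2
  exact le_antisymm le2 le1

theorem isTop_map_e (hα : StrictMono α) (k : Fin n) : IsTop (α (e k)) k := by
  have := sig_spec α k
  rwa [sig_eq_id α hα] at this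

theorem inV_map_iff (hα : StrictMono α) (k : Fin n) (x : LexPow ℤ n) :
    InV (k : ℕ) x ↔ InV (k : ℕ) (α x) := by
  have := map_top_aux α hα (e_pos k) (isTop_e k) (isTop_map_e α hα k) x
  exact this

theorem diag_one (hα : StrictMono α) (k : Fin n) : α (e k) k = 1 := by
  have hsymm := symm_strictMono α hα
  set y := α.symm (e k) with hy
  have hytop : IsTop y k := by
    have := isTop_map_e α.symm hsymm k
    rwa [← hy] at this
  set y' := y - (y k) • e k with hy'
  have hy'mem : InV (k : ℕ) y' := by
    intro i hi
    rcases eq_or_lt_of_le hi with heq | hlt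
    · have : i = k := Fin.ext heq.symm
      subst this
      show y i - y i * e i i = 0
      simp
    · show y i - y k * e k i = 0
      rw [hytop.2 i (by rwa [Fin.lt_iff_val_lt_val]), e_ne k i (by intro hc; subst hc; omega),
        mul_zero, sub_zero]
  have hαy' : InV (k : ℕ) (α y') := (inV_map_iff α hα k y').1 hy'mem
  have hexp : e k = α y' + (y k) • α (e k) := by
    rw [hy', map_sub, map_zsmul, sub_add_cancel, hy, α.apply_symm_apply]
  have hk := congrFun hexp k
  have h0 : α y' k = 0 := hαy' k le_rfl
  have hone : (1 : ℤ) = y k * α (e k) k := by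
    have : e k k = α y' k + y k * α (e k) k := hk
    rwa [e_same, h0, zero_add] at this
  have hd : 0 < α (e k) k := (isTop_map_e α hα k).pos (alpha_pos α hα (e_pos k))
  have hu : IsUnit (α (e k) k) := IsUnit.of_mul_eq_one (y k) (by linarith [hone])
  rcases Int.isUnit_iff.1 hu with h | h
  · exact h
  · rw [h] at hd; omega

/-- The key unitriangularity theorem: a dilation shifts the canonical filtration by one. -/
theorem shifts_one (hα : StrictMono α) :
    ∀ (m : ℕ) (x : LexPow ℤ n), InV m x → InV (m - 1) (α x - x) := by
  intro m
  induction m with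
  | zero =>
    intro x hx
    rw [inV_zero_iff.1 hx, map_zero, sub_zero]
    exact InV.zero
  | succ m ih =>
    intro x hx
    rcases le_or_gt n m with hnm | hmn
    · intro i hi
      exact absurd i.isLt (by omega)
    · set k : Fin n := ⟨m, hmn⟩ with hk
      set x' := x - (x k) • e k with hx'
      have hx'mem : InV m x' := by
        intro i hi
        rcases eq_or_lt_of_le hi with heq | hlt
        · have hik : i = k := Fin.ext (by rw [hk]; exact heq.symm)
          rw [hik]
          show x k - x k * e k k = 0
          simp
        · show x i - x k * e k i = 0
          rw [hx i (by omega), e_ne k i (by intro hc; subst hc; simp [hk] at hlt),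
            mul_zero, sub_zero]
      have h1 : InV m (α x' - x') := (ih x' hx'mem).mono (by omega)
      have h2 : InV m (α (e k) - e k) := by
        intro i hi
        rcases eq_or_lt_of_le hi with heq | hlt
        · have hik : i = k := Fin.ext (by rw [hk]; exact heq.symm)
          rw [hik]
          show α (e k) k - e k k = 0
          rw [diag_one α hα, e_same, sub_self]
        · show α (e k) i - e k i = 0
          have htop := isTop_map_e α hα k
          rw [htop.2 i (by rw [Fin.lt_iff_val_lt_val, hk]; exact hlt),
            e_ne k i (by intro hc; subst hc; simp [hk] at hlt), sub_self]
      have : α x - x = (α x' - x') + (x k) • (α (e k) - e k) := by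
        rw [hx', map_sub, map_zsmul, smul_sub]
        abel
      rw [this]
      have := h1.add (h2.smul (x k))
      simpa [Nat.succ_sub_one] using this.mono (le_refl _)

end Dilation

/-- composition group structure on additive automorphisms -/
instance addAutMulGroup (A : Type*) [Add A] : Group (AddAut A) where
  mul g h := AddEquiv.trans h g
  one := AddEquiv.refl _
  inv := AddEquiv.symm
  mul_assoc _ _ _ := rfl
  one_mul _ := rfl
  mul_one _ := rfl
  inv_mul_cancel := AddEquiv.self_trans_symm

theorem addAut_mul_apply {A : Type*} [Add A] (F G : AddAut A) (v : A) : (F * G) v = F (G v) := rfl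

theorem addAut_one_apply {A : Type*} [Add A] (v : A) : (1 : AddAut A) v = v := rfl

section Filtration

open OPAffineAut

variable {n : ℕ}

theorem apply_eq (f : OPAffineAut (LexPow ℤ n)) (x : LexPow ℤ n) :
    f x = f.dilation x + f 0 := by
  have := f.affine x 0
  rw [sub_zero] at this
  have h : f x - f 0 = f.dilation x := this
  linear_combination (norm := module) h

theorem eq_one_of_forall_fixed {f : OPAffineAut (LexPow ℤ n)} (h : ∀ x, f x = x) :
    f = 1 := OPAffineAut.ext' fun x => by rw [h x]; rfl

/-- membership in the `m`-th step of the filtration of the extended space -/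
def InW (m : ℕ) (v : (LexPow ℤ n) × ℤ) : Prop := InV m v.1 ∧ (m ≤ n → v.2 = 0)

theorem InW.mono {m m' : ℕ} (h : m ≤ m') {v : (LexPow ℤ n) × ℤ} (hv : InW m v) :
    InW m' v := ⟨hv.1.mono h, fun h' => hv.2 (le_trans h h')⟩

theorem InW.zero {m : ℕ} : InW m ((0, 0) : (LexPow ℤ n) × ℤ) := ⟨InV.zero, fun _ => rfl⟩

theorem InW.zero' {m : ℕ} : InW m (0 : (LexPow ℤ n) × ℤ) := InW.zero

theorem InW.add {m : ℕ} {v w : (LexPow ℤ n) × ℤ} (hv : InW m v) (hw : InW m w) :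
    InW m (v + w) :=
  ⟨hv.1.add hw.1, fun h => by show v.2 + w.2 = 0; rw [hv.2 h, hw.2 h, add_zero]⟩

theorem InW.neg {m : ℕ} {v : (LexPow ℤ n) × ℤ} (hv : InW m v) : InW m (-v) :=
  ⟨hv.1.neg, fun h => by show -v.2 = 0; rw [hv.2 h, neg_zero]⟩

theorem InW.sub {m : ℕ} {v w : (LexPow ℤ n) × ℤ} (hv : InW m v) (hw : InW m w) :
    InW m (v - w) := by simpa [sub_eq_add_neg] using hv.add hw.neg

theorem inW_top (v : (LexPow ℤ n) × ℤ) : InW (n + 1) v :=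
  ⟨inV_of_ge (by omega) _, fun h => absurd h (by omega)⟩

theorem inW_zero_iff {v : (LexPow ℤ n) × ℤ} : InW 0 v ↔ v = 0 := by
  constructor
  · rintro ⟨h1, h2⟩
    exact Prod.ext (inV_zero_iff.1 h1) (h2 (Nat.zero_le n))
  · rintro rfl; exact InW.zero'

/-- The extended (affine-as-linear) action of `f` on `(Fin n → ℤ) × ℤ`. -/
noncomputable def Mmap (f : OPAffineAut (LexPow ℤ n)) : (LexPow ℤ n) × ℤ ≃+ (LexPow ℤ n) × ℤ where
  toFun v := (f.dilation v.1 + v.2 • (f 0), v.2)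
  invFun v := (f.dilation.symm (v.1 - v.2 • (f 0)), v.2)
  left_inv v := by
    refine Prod.ext ?_ rfl
    show f.dilation.symm (f.dilation v.1 + v.2 • (f 0) - v.2 • (f 0)) = v.1
    rw [add_sub_cancel_right, AddEquiv.symm_apply_apply]
  right_inv v := by
    refine Prod.ext ?_ rfl
    show f.dilation (f.dilation.symm (v.1 - v.2 • (f 0))) + v.2 • (f 0) = v.1
    rw [AddEquiv.apply_symm_apply, sub_add_cancel]
  map_add' v w := by
    refine Prod.ext ?_ rfl
    show f.dilation (v.1 + w.1) + (v.2 + w.2) • (f 0)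
      = f.dilation v.1 + v.2 • (f 0) + (f.dilation w.1 + w.2 • (f 0))
    rw [map_add, add_smul]
    abel

theorem mul_dilation_apply (f g : OPAffineAut (LexPow ℤ n)) (x : LexPow ℤ n) :
    (f * g).dilation x = f.dilation (g.dilation x) := rfl

/-- `Mmap` as a group homomorphism to additive automorphisms. -/
noncomputable def Mhom : OPAffineAut (LexPow ℤ n) →* AddAut ((LexPow ℤ n) × ℤ) :=
  MonoidHom.mk' (fun f => Mmap f) (by
    intro f g
    refine AddEquiv.ext fun v => ?_
    rw [addAut_mul_apply]
    refine Prod.ext ?_ rfl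
    show (f * g).dilation v.1 + v.2 • ((f * g) 0)
      = f.dilation (g.dilation v.1 + v.2 • (g 0)) + v.2 • (f 0)
    rw [mul_dilation_apply, map_add, map_zsmul]
    have h0 : (f * g) 0 = f.dilation (g 0) + f 0 := by
      rw [mul_apply, apply_eq]
    rw [h0, smul_add]
    abel)

/-- `F` shifts the filtration by `j`. -/
def Sh (F : AddAut ((LexPow ℤ n) × ℤ)) (j : ℕ) : Prop :=
  ∀ (m : ℕ) v, InW m v → InW (m - j) (F v - v)

theorem sh_one (f : OPAffineAut (LexPow ℤ n)) : Sh (Mhom f) 1 := by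
  rintro m v ⟨h1, h2⟩
  have hMv : (Mhom f) v - v = (f.dilation v.1 + v.2 • (f 0) - v.1, 0) := by
    refine Prod.ext rfl ?_
    show v.2 - v.2 = 0
    rw [sub_self]
  rw [hMv]
  refine ⟨?_, fun _ => rfl⟩
  rcases le_or_gt m n with hmn | hnm
  · rw [h2 hmn, zero_smul, add_zero]
    exact shifts_one f.dilation f.dilation_strictMono m v.1 h1
  · exact inV_of_ge (by omega) _

theorem Sh.mono {F : AddAut ((LexPow ℤ n) × ℤ)} {j j' : ℕ} (h : Sh F j) (hj : j' ≤ j) :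
    Sh F j' := fun m v hv => ((h m v hv).mono (by omega))

theorem Sh.preserve {F : AddAut ((LexPow ℤ n) × ℤ)} {j : ℕ} (h : Sh F j) {m : ℕ}
    {v : (LexPow ℤ n) × ℤ} (hv : InW m v) : InW m (F v) := by
  have := (h m v hv).mono (Nat.sub_le m j)
  simpa using this.add hv

theorem sh_id (j : ℕ) : Sh (1 : AddAut ((LexPow ℤ n) × ℤ)) j := by
  intro m v hv
  simpa [addAut_one_apply] using InW.zero'.mono (Nat.zero_le _)

theorem Sh.mul {F G : AddAut ((LexPow ℤ n) × ℤ)} {j : ℕ} (hF : Sh F j) (hG : Sh G j) :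
    Sh (F * G) j := by
  intro m v hv
  have h1 : InW m (G v) := hG.preserve hv
  have h2 := hF m (G v) h1
  have h3 := hG m v hv
  have : (F * G) v - v = (F (G v) - G v) + (G v - v) := by
    rw [addAut_mul_apply]; abel
  rw [this]
  exact h2.add h3

theorem Sh.inv {F : AddAut ((LexPow ℤ n) × ℤ)} {j : ℕ} (hF : Sh F j) (hF1 : Sh F⁻¹ 1)
    : Sh F⁻¹ j := by
  intro m v hv
  have hkey : F⁻¹ v - v = -(F⁻¹ (F v - v)) := by
    rw [map_sub]
    have : F⁻¹ (F v) = v := by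
      rw [← addAut_mul_apply, inv_mul_cancel, addAut_one_apply]
    rw [this]; abel
  rw [hkey]
  exact ((hF1.preserve (hF m v hv)) : InW (m - j) (F⁻¹ (F v - v))).neg

theorem sh_comm {F G : AddAut ((LexPow ℤ n) × ℤ)} {i j : ℕ} (hF : Sh F i) (hG : Sh G j)
    (hF1 : Sh F⁻¹ 1) (hG1 : Sh G⁻¹ 1) : Sh ⁅F, G⁆ (i + j) := by
  intro m v hv
  set z := F⁻¹ (G⁻¹ v) with hz
  have hzm : InW m z := hF1.preserve (hG1.preserve hv)
  have hFz : F z = G⁻¹ v := by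
    rw [hz, ← addAut_mul_apply, mul_inv_cancel, addAut_one_apply]
  have hGFz : G (F z) = v := by
    rw [hFz, ← addAut_mul_apply, mul_inv_cancel, addAut_one_apply]
  have hkey : ⁅F, G⁆ v - v = (F (G z - z) - (G z - z)) - (G (F z - z) - (F z - z)) := by
    have hc : ⁅F, G⁆ v = F (G z) := by
      rw [commutatorElement_def, addAut_mul_apply, addAut_mul_apply, addAut_mul_apply, hz]
    rw [hc, map_sub, map_sub, ← hGFz]
    abel
  rw [hkey]
  have h1 : InW (m - j - i) (F (G z - z) - (G z - z)) := hF _ _ (hG m z hzm)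
  have h2 : InW (m - i - j) (G (F z - z) - (F z - z)) := hG _ _ (hF m z hzm)
  have e1 : m - j - i = m - (i + j) := by omega
  have e2 : m - i - j = m - (i + j) := by omega
  rw [e1] at h1
  rw [e2] at h2
  exact h1.sub h2

theorem sh_top {F : AddAut ((LexPow ℤ n) × ℤ)} (h : Sh F (n + 1)) (v : (LexPow ℤ n) × ℤ) :
    F v = v := by
  have := h (n + 1) v (inW_top v)
  rw [Nat.sub_self] at this
  have := inW_zero_iff.1 this
  have := sub_eq_zero.1 this
  exact this

theorem eq_one_of_sh_top {f : OPAffineAut (LexPow ℤ n)} (h : Sh (Mhom f) (n + 1)) :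
    f = 1 := by
  refine eq_one_of_forall_fixed fun x => ?_
  have h1 := sh_top h (x, 1)
  have h2 := congrArg Prod.fst h1
  have h3 : f.dilation x + (1 : ℤ) • (f 0) = x := h2
  rw [one_smul] at h3
  rw [apply_eq]
  exact h3

end Filtration

section Nilpotent

open OPAffineAut

variable {n : ℕ} {G : Type*} [Group G]

/-- The subgroup of elements whose affine action shifts the filtration by `j`. -/
noncomputable def HH (ρ : G →* OPAffineAut (LexPow ℤ n)) (j : ℕ) : Subgroup G where
  carrier := {x | Sh (Mhom (ρ x)) j}
  one_mem' := by
    show Sh (Mhom (ρ 1)) j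
    rw [map_one, map_one]
    exact sh_id j
  mul_mem' := by
    intro a b ha hb
    show Sh (Mhom (ρ (a * b))) j
    rw [map_mul, map_mul]
    exact Sh.mul ha hb
  inv_mem' := by
    intro a ha
    show Sh (Mhom (ρ a⁻¹)) j
    rw [map_inv, map_inv]
    refine Sh.inv ha ?_
    rw [← map_inv, ← map_inv]
    exact sh_one _

theorem lcs_le_HH (ρ : G →* OPAffineAut (LexPow ℤ n)) :
    ∀ j : ℕ, Subgroup.lowerCentralSeries (⊤ : Subgroup G) j ≤ HH ρ (j + 1) := by
  intro j
  induction j with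
  | zero =>
    intro x _
    exact sh_one (ρ x)
  | succ j ih =>
    rw [lowerCentralSeries_succ]
    refine Subgroup.commutator_le.2 fun p hp q _ => ?_
    have hp' : Sh (Mhom (ρ p)) (j + 1) := ih hp
    have hq' : Sh (Mhom (ρ q)) 1 := sh_one (ρ q)
    show Sh (Mhom (ρ ⁅p, q⁆)) (j + 2)
    have hmap : Mhom (ρ ⁅p, q⁆) = ⁅Mhom (ρ p), Mhom (ρ q)⁆ := by
      rw [map_commutatorElement, map_commutatorElement]
    rw [hmap]
    have hcm := sh_comm hp' hq'
      (by rw [← map_inv, ← map_inv]; exact sh_one _)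
      (by rw [← map_inv, ← map_inv]; exact sh_one _)
    exact (by omega : j + 1 + 1 = j + 2) ▸ hcm

theorem isNilpotent_of_affine (ρ : G →* OPAffineAut (LexPow ℤ n))
    (hρ : Function.Injective ρ) : Group.IsNilpotent G := by
  rw [Subgroup.nilpotent_iff_lowerCentralSeries]
  refine ⟨n + 1, ?_⟩
  rw [eq_bot_iff]
  intro x hx
  have h1 : Sh (Mhom (ρ x)) (n + 2) := lcs_le_HH ρ (n + 1) hx
  have h2 : ρ x = 1 := eq_one_of_sh_top (h1.mono (by omega))
  have : x = 1 := hρ (by rw [h2, map_one])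
  simpa using this

theorem pow_gt (f : OPAffineAut (LexPow ℤ n)) {x : LexPow ℤ n} (hx : x < f x) :
    ∀ k : ℕ, x < (f ^ (k + 1)) x := by
  intro k
  induction k with
  | zero => simpa using hx
  | succ k ih =>
    have h1 : (f ^ (k + 1)) x < (f ^ (k + 1)) (f x) := (f ^ (k + 1)).strictMono' hx
    have h2 : (f ^ (k + 2)) x = (f ^ (k + 1)) (f x) := by
      rw [pow_succ, mul_apply]
    rw [h2]
    exact lt_trans ih h1

theorem pow_lt (f : OPAffineAut (LexPow ℤ n)) {x : LexPow ℤ n} (hx : f x < x) :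
    ∀ k : ℕ, (f ^ (k + 1)) x < x := by
  intro k
  induction k with
  | zero => simpa using hx
  | succ k ih =>
    have h1 : (f ^ (k + 1)) (f x) < (f ^ (k + 1)) x := (f ^ (k + 1)).strictMono' hx
    have h2 : (f ^ (k + 2)) x = (f ^ (k + 1)) (f x) := by
      rw [pow_succ, mul_apply]
    rw [h2]
    exact lt_trans h1 ih

theorem isTorsionFree_of_affine (ρ : G →* OPAffineAut (LexPow ℤ n))
    (hρ : Function.Injective ρ) : Monoid.IsTorsionFree G := by
  intro g hg hfin
  rcases (isOfFinOrder_iff_pow_eq_one).1 hfin with ⟨k, hk, hgk⟩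
  set f := ρ g with hf
  have hfne : f ≠ 1 := fun hc => hg (hρ (by rw [map_one, ← hf, hc]))
  have hx : ∃ x, f x ≠ x := by
    by_contra h
    push_neg at h
    exact hfne (eq_one_of_forall_fixed h)
  rcases hx with ⟨x, hxne⟩
  have hfk : (f ^ k) x = x := by
    rw [hf, ← map_pow, hgk, map_one]; rfl
  obtain ⟨k', rfl⟩ : ∃ k', k = k' + 1 := ⟨k - 1, by omega⟩
  rcases lt_or_gt_of_ne hxne with hlt | hgt
  · have := pow_lt f hlt k'
    rw [hfk] at this
    exact lt_irrefl x this
  · have := pow_gt f hgt k'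
    rw [hfk] at this
    exact lt_irrefl x this

end Nilpotent

section FGHelpers

variable {G : Type*} [Group G]

/-- A group that embeds into the multiplicative version of a Noetherian `ℤ`-module is
finitely generated. -/
theorem fg_of_injective_into_noetherian {A : Type*} [AddCommGroup A] [IsNoetherian ℤ A]
    (ψ : G →* Multiplicative A) (hψ : Function.Injective ψ) : Group.FG G := by
  have hsub : ψ.range.FG := by
    rw [Subgroup.fg_iff_add_fg]
    set S : AddSubgroup A := Subgroup.toAddSubgroup ψ.range with hS
    have h1 : (AddSubgroup.toIntSubmodule S).FG := IsNoetherian.noetherian _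
    have h2 : (AddSubgroup.toIntSubmodule S).toAddSubgroup.FG :=
      (Submodule.fg_iff_addSubgroup_fg _).1 h1
    exact h2
  have hrange : Group.FG ψ.range := (Group.fg_iff_subgroup_fg _).2 hsub
  exact Group.fg_of_surjective (f := (MonoidHom.ofInjective hψ).symm.toMonoidHom)
    (MulEquiv.surjective _)

/-- Extensions of finitely generated groups by finitely generated groups are finitely
generated. -/
theorem fg_of_ker_of_range {H : Type*} [Group H] (φ : G →* H)
    (hker : Group.FG φ.ker) (hrange : Group.FG φ.range) : Group.FG G := by
  classical
  obtain ⟨S, hS⟩ := (Group.fg_iff_subgroup_fg φ.ker).1 hker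
  obtain ⟨T, hT⟩ := (Group.fg_iff_subgroup_fg φ.range).1 hrange
  set u : H → G := fun h => if hh : h ∈ φ.range then Classical.choose hh else 1 with hu'
  have hu : ∀ h ∈ φ.range, φ (u h) = h := by
    intro h hh
    rw [hu']
    simp only [dif_pos hh]
    exact Classical.choose_spec hh
  refine Group.fg_iff.2 ⟨↑S ∪ (u '' ↑T), ?_, S.finite_toSet.union (T.finite_toSet.image _)⟩
  set K := Subgroup.closure (↑S ∪ (u '' ↑T)) with hK
  have hkerK : φ.ker ≤ K := by
    rw [← hS]
    exact Subgroup.closure_mono Set.subset_union_left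
  have hmain : ∀ h ∈ Subgroup.closure (↑T : Set H), ∃ w ∈ K, φ w = h := by
    intro h hh
    refine Subgroup.closure_induction ?_ ?_ ?_ ?_ hh
    · intro t ht
      have htr : t ∈ φ.range := hT ▸ Subgroup.subset_closure ht
      exact ⟨u t, Subgroup.subset_closure (Or.inr ⟨t, ht, rfl⟩), hu t htr⟩
    · exact ⟨1, K.one_mem, map_one φ⟩
    · rintro z₁ z₂ _ _ ⟨w₁, hw₁, hφ₁⟩ ⟨w₂, hw₂, hφ₂⟩
      exact ⟨w₁ * w₂, K.mul_mem hw₁ hw₂, by rw [map_mul, hφ₁, hφ₂]⟩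
    · rintro z _ ⟨w, hw, hφw⟩
      exact ⟨w⁻¹, K.inv_mem hw, by rw [map_inv, hφw]⟩
  rw [eq_top_iff]
  intro g _
  have hg : φ g ∈ Subgroup.closure (↑T : Set H) := by
    rw [hT]
    exact MonoidHom.mem_range.mpr ⟨g, rfl⟩
  obtain ⟨w, hwK, hw⟩ := hmain _ hg
  have hker' : g * w⁻¹ ∈ φ.ker := by
    rw [MonoidHom.mem_ker, map_mul, map_inv, hw]
    simp
  have h1 : g * w⁻¹ ∈ K := hkerK hker'
  have h2 : g * w⁻¹ * w ∈ K := K.mul_mem h1 hwK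
  simpa using h2

end FGHelpers

section Restriction

open OPAffineAut

variable {n : ℕ}

/-- inclusion `ℤ^n → ℤ^{n+1}` (zero last coordinate) -/
def iup (y : LexPow ℤ n) : LexPow ℤ (n + 1) := Fin.snoc y 0

/-- projection `ℤ^{n+1} → ℤ^n` -/
def pdown (x : LexPow ℤ (n + 1)) : LexPow ℤ n := fun i => x (Fin.castSucc i)

theorem iup_last (y : LexPow ℤ n) : iup y (Fin.last n) = 0 := Fin.snoc_last _ _

theorem iup_castSucc (y : LexPow ℤ n) (i : Fin n) : iup y (Fin.castSucc i) = y i :=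
  Fin.snoc_castSucc _ _ _

theorem pdown_iup (y : LexPow ℤ n) : pdown (iup y) = y :=
  funext fun i => iup_castSucc y i

theorem iup_pdown {x : LexPow ℤ (n + 1)} (hx : x (Fin.last n) = 0) : iup (pdown x) = x := by
  funext i
  induction i using Fin.lastCases with
  | last => rw [iup_last, hx]
  | cast i => rw [iup_castSucc]; rfl

theorem iup_add (a b : LexPow ℤ n) : iup (a + b) = iup a + iup b := by
  funext i
  induction i using Fin.lastCases with
  | last =>
    show iup (a + b) (Fin.last n) = iup a (Fin.last n) + iup b (Fin.last n)
    rw [iup_last, iup_last, iup_last, add_zero]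
  | cast i =>
    show iup (a + b) (Fin.castSucc i) = iup a (Fin.castSucc i) + iup b (Fin.castSucc i)
    rw [iup_castSucc, iup_castSucc, iup_castSucc]
    rfl

theorem iup_sub (a b : LexPow ℤ n) : iup (a - b) = iup a - iup b := by
  funext i
  induction i using Fin.lastCases with
  | last =>
    show iup (a - b) (Fin.last n) = iup a (Fin.last n) - iup b (Fin.last n)
    rw [iup_last, iup_last, iup_last, sub_zero]
  | cast i =>
    show iup (a - b) (Fin.castSucc i) = iup a (Fin.castSucc i) - iup b (Fin.castSucc i)
    rw [iup_castSucc, iup_castSucc, iup_castSucc]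
    rfl

theorem iup_lt {a b : LexPow ℤ n} (h : a < b) : iup a < iup b := by
  rcases lexpow_lt_iff.1 h with ⟨i, hi, hj⟩
  refine lexpow_lt_iff.2 ⟨Fin.castSucc i, by rwa [iup_castSucc, iup_castSucc], fun j hj' => ?_⟩
  induction j using Fin.lastCases with
  | last => rw [iup_last, iup_last]
  | cast j =>
    rw [iup_castSucc, iup_castSucc]
    exact hj j (Fin.castSucc_lt_castSucc_iff.1 hj')

theorem lt_pdown {x x' : LexPow ℤ (n + 1)} (h : x < x')
    (hl : x (Fin.last n) = x' (Fin.last n)) : pdown x < pdown x' := by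
  rcases lexpow_lt_iff.1 h with ⟨i, hi, hj⟩
  have hine : i ≠ Fin.last n := by
    intro hc
    rw [hc, hl] at hi
    exact lt_irrefl _ hi
  have hival : (i : ℕ) < n := by
    have := i.isLt
    have : (i : ℕ) ≠ n := fun hc => hine (Fin.ext (by rw [hc]; rfl))
    omega
  refine lexpow_lt_iff.2 ⟨⟨i, hival⟩, ?_, fun j hj' => ?_⟩
  · show x (Fin.castSucc ⟨i, hival⟩) < x' (Fin.castSucc ⟨i, hival⟩)
    have : Fin.castSucc ⟨(i : ℕ), hival⟩ = i := Fin.ext rfl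
    rw [this]
    exact hi
  · show x (Fin.castSucc j) = x' (Fin.castSucc j)
    refine hj _ ?_
    rw [Fin.lt_iff_val_lt_val] at hj' ⊢
    exact_mod_cast hj'

theorem dil_last (f : OPAffineAut (LexPow ℤ (n + 1))) (x : LexPow ℤ (n + 1)) :
    f.dilation x (Fin.last n) = x (Fin.last n) := by
  have h := shifts_one f.dilation f.dilation_strictMono (n + 1) x (inV_of_ge le_rfl x)
    (Fin.last n) (by rw [Fin.val_last]; omega)
  have h' : f.dilation x (Fin.last n) - x (Fin.last n) = 0 := h
  linarith

theorem dil_symm_last (f : OPAffineAut (LexPow ℤ (n + 1))) (x : LexPow ℤ (n + 1)) :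
    f.dilation.symm x (Fin.last n) = x (Fin.last n) := by
  have := dil_last f (f.dilation.symm x)
  rw [AddEquiv.apply_symm_apply] at this
  exact this.symm

theorem apply_last (f : OPAffineAut (LexPow ℤ (n + 1))) (x : LexPow ℤ (n + 1)) :
    f x (Fin.last n) = x (Fin.last n) + (f 0) (Fin.last n) := by
  rw [apply_eq f x]
  show f.dilation x (Fin.last n) + (f 0) (Fin.last n) = _
  rw [dil_last]

/-- the homomorphism recording the translation in the most significant coordinate -/
noncomputable def tauHom : OPAffineAut (LexPow ℤ (n + 1)) →* Multiplicative ℤ :=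
  MonoidHom.mk' (fun f => Multiplicative.ofAdd ((f 0) (Fin.last n))) (by
    intro f g
    have h1 : ((f * g) 0) (Fin.last n) = (g 0) (Fin.last n) + (f 0) (Fin.last n) := by
      rw [mul_apply, apply_last]
    show Multiplicative.ofAdd _ = Multiplicative.ofAdd _ * Multiplicative.ofAdd _
    rw [← ofAdd_add, h1, add_comm])

/-- restriction of an affine automorphism preserving the last coordinate -/
noncomputable def resAut (f : OPAffineAut (LexPow ℤ (n + 1)))
    (hf : ∀ x, f x (Fin.last n) = x (Fin.last n)) : OPAffineAut (LexPow ℤ n) where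
  toFun y := pdown (f (iup y))
  invFun y := pdown (f.toEquiv.symm (iup y))
  left_inv y := by
    have h1 : (f (iup y)) (Fin.last n) = 0 := by rw [hf, iup_last]
    show pdown (f.toEquiv.symm (iup (pdown (f (iup y))))) = y
    rw [iup_pdown h1, Equiv.symm_apply_apply, pdown_iup]
  right_inv y := by
    have h0 : ∀ x, (f.toEquiv.symm x) (Fin.last n) = x (Fin.last n) := fun x => by
      have := hf (f.toEquiv.symm x)
      rw [Equiv.apply_symm_apply] at this
      exact this.symm
    have h1 : (f.toEquiv.symm (iup y)) (Fin.last n) = 0 := by rw [h0, iup_last]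
    show pdown (f (iup (pdown (f.toEquiv.symm (iup y))))) = y
    rw [iup_pdown h1, Equiv.apply_symm_apply, pdown_iup]
  strictMono' a b hab := by
    show pdown (f (iup a)) < pdown (f (iup b))
    refine lt_pdown (f.strictMono' (iup_lt hab)) ?_
    rw [hf, hf, iup_last, iup_last]
  dilation :=
    { toFun := fun y => pdown (f.dilation (iup y))
      invFun := fun y => pdown (f.dilation.symm (iup y))
      left_inv := fun y => by
        have h1 : (f.dilation (iup y)) (Fin.last n) = 0 := by rw [dil_last, iup_last]
        show pdown (f.dilation.symm (iup (pdown (f.dilation (iup y))))) = y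
        rw [iup_pdown h1, AddEquiv.symm_apply_apply, pdown_iup]
      right_inv := fun y => by
        have h1 : (f.dilation.symm (iup y)) (Fin.last n) = 0 := by
          rw [dil_symm_last, iup_last]
        show pdown (f.dilation (iup (pdown (f.dilation.symm (iup y))))) = y
        rw [iup_pdown h1, AddEquiv.apply_symm_apply, pdown_iup]
      map_add' := fun a b => by
        show pdown (f.dilation (iup (a + b)))
          = pdown (f.dilation (iup a)) + pdown (f.dilation (iup b))
        rw [iup_add, map_add]
        rfl }
  dilation_strictMono a b hab := by
    show pdown (f.dilation (iup a)) < pdown (f.dilation (iup b))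
    refine lt_pdown (f.dilation_strictMono (iup_lt hab)) ?_
    rw [dil_last, dil_last, iup_last, iup_last]
  affine x y := by
    show pdown (f (iup x)) - pdown (f (iup y)) = pdown (f.dilation (iup (x - y)))
    have h1 : pdown (f (iup x)) - pdown (f (iup y)) = pdown (f (iup x) - f (iup y)) := rfl
    rw [h1, f.affine, iup_sub]

theorem resAut_apply (f : OPAffineAut (LexPow ℤ (n + 1)))
    (hf : ∀ x, f x (Fin.last n) = x (Fin.last n)) (y : LexPow ℤ n) :
    (resAut f hf) y = pdown (f (iup y)) := rfl

end Restriction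

section FGMain

open OPAffineAut

theorem fg_of_affine0 : ∀ (n : ℕ) (G : Type) [Group G]
    (ρ : G →* OPAffineAut (LexPow ℤ n)), Function.Injective ρ → Group.FG G := by
  intro n
  induction n with
  | zero =>
    intro G _ ρ hρ
    have hsub : ∀ x y : LexPow ℤ 0, x = y := fun x y => funext fun i => i.elim0
    have htriv : ∀ g : G, g = 1 := fun g =>
      hρ (by rw [map_one]; exact OPAffineAut.ext' fun x => hsub _ _)
    refine Group.fg_iff.2 ⟨{1}, ?_, Set.finite_singleton _⟩
    rw [eq_top_iff]
    intro g _
    rw [htriv g]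
    exact Subgroup.subset_closure rfl
  | succ n ih =>
    intro G _ ρ hρ
    set φ := tauHom.comp ρ with hφ
    have hrange : Group.FG φ.range :=
      fg_of_injective_into_noetherian (A := ℤ) φ.range.subtype (Subgroup.subtype_injective _)
    have hfix : ∀ x : φ.ker, ∀ v, (ρ (x : G)) v (Fin.last n) = v (Fin.last n) := by
      intro x v
      have hx : φ (x : G) = 1 := x.2
      have h0 : ((ρ (x : G)) 0) (Fin.last n) = 0 := by
        have : Multiplicative.ofAdd (((ρ (x : G)) 0) (Fin.last n)) = 1 := hx
        exact ofAdd_eq_one.1 this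
      rw [apply_last, h0, add_zero]
    set r : φ.ker →* OPAffineAut (LexPow ℤ n) :=
      MonoidHom.mk' (fun x => resAut (ρ (x : G)) (hfix x)) (by
        intro x y
        refine OPAffineAut.ext' fun z => ?_
        show pdown ((ρ ((x * y : φ.ker) : G)) (iup z))
          = (resAut (ρ (x : G)) (hfix x)) ((resAut (ρ (y : G)) (hfix y)) z)
        have hc : ((x * y : φ.ker) : G) = (x : G) * (y : G) := rfl
        rw [hc, map_mul, mul_apply]
        show pdown ((ρ (x : G)) ((ρ (y : G)) (iup z)))
          = pdown ((ρ (x : G)) (iup (pdown ((ρ (y : G)) (iup z)))))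
        rw [iup_pdown (by rw [hfix, iup_last])]) with hr
    -- elements of the kernel of `r` fix all vectors with vanishing last coordinate
    have hfix0 : ∀ x : φ.ker, x ∈ r.ker → ∀ v : LexPow ℤ (n + 1),
        v (Fin.last n) = 0 → (ρ (x : G)) v = v := by
      intro x hx v hv
      have happ : ∀ z, (r x) z = z := fun z => by
        rw [MonoidHom.mem_ker] at hx
        rw [hx]
        rfl
      have h1 : pdown ((ρ (x : G)) (iup (pdown v))) = pdown v := happ (pdown v)
      have h2 : iup (pdown v) = v := iup_pdown hv
      have h3 : ((ρ (x : G)) v) (Fin.last n) = 0 := by rw [hfix, hv]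
      have h4 : pdown ((ρ (x : G)) v) = pdown v := by
        rw [← h2, pdown_iup]
        exact h1
      rw [← iup_pdown h3, h4, h2]
    have hdil0 : ∀ x : φ.ker, x ∈ r.ker → ∀ v : LexPow ℤ (n + 1),
        v (Fin.last n) = 0 → (ρ (x : G)).dilation v = v := by
      intro x hx v hv
      have hf0 : (ρ (x : G)) 0 = 0 := hfix0 x hx 0 rfl
      have := apply_eq (ρ (x : G)) v
      rw [hfix0 x hx v hv, hf0, add_zero] at this
      exact this.symm
    -- the kernel of r embeds in ℤ^{n+1}
    have hLfg : Group.FG r.ker := by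
      have hhom : ∀ x y : r.ker,
          (ρ (((x * y : r.ker) : φ.ker) : G)).dilation (e (Fin.last n)) - e (Fin.last n)
          = ((ρ ((x : φ.ker) : G)).dilation (e (Fin.last n)) - e (Fin.last n))
            + ((ρ ((y : φ.ker) : G)).dilation (e (Fin.last n)) - e (Fin.last n)) := by
        intro x y
        have hc : (((x * y : r.ker) : φ.ker) : G) = ((x : φ.ker) : G) * ((y : φ.ker) : G) := rfl
        rw [hc, map_mul]
        set a := (ρ ((x : φ.ker) : G)).dilation with ha
        set b := (ρ ((y : φ.ker) : G)).dilation with hb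
        have hmd : (ρ ((x : φ.ker) : G) * ρ ((y : φ.ker) : G)).dilation (e (Fin.last n))
            = a (b (e (Fin.last n))) := mul_dilation_apply _ _ _
        rw [hmd]
        have hlast : (b (e (Fin.last n)) - e (Fin.last n)) (Fin.last n) = 0 := by
          show b (e (Fin.last n)) (Fin.last n) - e (Fin.last n) (Fin.last n) = 0
          rw [hb, dil_last, sub_self]
        have hafix : a (b (e (Fin.last n)) - e (Fin.last n))
            = b (e (Fin.last n)) - e (Fin.last n) := by
          rw [ha]
          exact hdil0 (x : φ.ker) x.2 _ hlast
        have hexp : a (b (e (Fin.last n))) = a (b (e (Fin.last n)) - e (Fin.last n))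
            + a (e (Fin.last n)) := by
          rw [← map_add]
          congr 1
          abel
        rw [hexp, hafix]
        abel
      set χ : r.ker →* Multiplicative (Fin (n + 1) → ℤ) :=
        MonoidHom.mk' (fun x =>
          Multiplicative.ofAdd
            (show Fin (n+1) → ℤ from
              (ρ ((x : φ.ker) : G)).dilation (e (Fin.last n)) - e (Fin.last n)))
          (by
            intro x y
            show Multiplicative.ofAdd _ = Multiplicative.ofAdd _ * Multiplicative.ofAdd _
            rw [← ofAdd_add]
            exact congrArg Multiplicative.ofAdd (hhom x y)) with hχ
      refine fg_of_injective_into_noetherian χ ?_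
      refine (injective_iff_map_eq_one χ).2 fun x hx => ?_
      have hdile : (ρ ((x : φ.ker) : G)).dilation (e (Fin.last n)) = e (Fin.last n) := by
        have h1 : (ρ ((x : φ.ker) : G)).dilation (e (Fin.last n)) - e (Fin.last n) = 0 := by
          have := congrArg Multiplicative.toAdd hx
          exact this
        have := sub_eq_zero.1 h1
        exact this
      have hdall : ∀ v : LexPow ℤ (n + 1), (ρ ((x : φ.ker) : G)).dilation v = v := by
        intro v
        set c := v (Fin.last n) with hc
        have hsplit : v = (v - c • e (Fin.last n)) + c • e (Fin.last n) := by abel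
        have hv0 : (v - c • e (Fin.last n)) (Fin.last n) = 0 := by
          show v (Fin.last n) - c * e (Fin.last n) (Fin.last n) = 0
          rw [e_same, mul_one, hc, sub_self]
        rw [hsplit, map_add, map_zsmul, hdile, hdil0 (x : φ.ker) x.2 _ hv0]
      have hone : ρ ((x : φ.ker) : G) = 1 := by
        refine eq_one_of_forall_fixed fun v => ?_
        rw [apply_eq, hdall, hfix0 (x : φ.ker) x.2 0 rfl, add_zero]
      have : ((x : φ.ker) : G) = 1 := hρ (by rw [hone, map_one])
      exact Subtype.ext (Subtype.ext this)
    have hRfg : Group.FG r.range := ih r.range r.range.subtype (Subgroup.subtype_injective _)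
    have hKfg : Group.FG φ.ker := fg_of_ker_of_range r hLfg hRfg
    exact fg_of_ker_of_range φ hKfg hrange

theorem fg_of_affine (n : ℕ) {G : Type*} [Group G]
    (ρ : G →* OPAffineAut (LexPow ℤ n)) (hρ : Function.Injective ρ) : Group.FG G := by
  have h0 : Group.FG ρ.range :=
    fg_of_affine0 n ρ.range ρ.range.subtype (Subgroup.subtype_injective _)
  exact Group.fg_of_surjective (f := (MonoidHom.ofInjective hρ).symm.toMonoidHom)
    (MulEquiv.surjective _)

end FGMain

end AffProof

/-- If a group admits a faithful orientation-preserving affine action on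
`ℤ^n_lex` for some `n`, then it is finitely generated, torsion-free and nilpotent. -/
theorem fg_torsionFree_nilpotent_of_faithful_affineAction
    (G : Type*) [Group G] (n : ℕ) (ρ : G →* OPAffineAut (LexPow ℤ n))
    (hρ : Function.Injective ρ) :
    Group.FG G ∧ Monoid.IsTorsionFree G ∧ Group.IsNilpotent G :=
  ⟨AffProof.fg_of_affine n ρ hρ, AffProof.isTorsionFree_of_affine ρ hρ,
    AffProof.isNilpotent_of_affine ρ hρ⟩
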